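/- The function C defined by the recurrence C(2) = 1, C(3) = 2, and C(n) = 2⌊(n-1)/2⌋ + C(⌊n/2⌋) for n ≥ 4 satisfies C(n) = 2n - 2 - ⌊log₂ n⌋ - ⌊log₂(2n/3)⌋ for all n ≥ 2. -/

import Mathlib

lemma log2_two_mul {q : ℕ} (hq : 1 ≤ q) : Nat.log 2 (2 * q) = Nat.log 2 q + 1 := by
  rw [mul_comm]; exact Nat.log_mul_base one_lt_two (by omega)

lemma log2_two_mul_add_one {q : ℕ} (hq : 1 ≤ q) :
    Nat.log 2 (2 * q + 1) = Nat.log 2 q + 1 := by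
  apply Nat.log_eq_of_pow_le_of_lt_pow
  · have := Nat.pow_log_le_self 2 (x := q) (by omega)
    rw [pow_succ]; omega
  · have := Nat.lt_pow_succ_log_self (b := 2) one_lt_two q
    rw [pow_succ, pow_succ] at *; omega

lemma log2_succ_of_not_pow {q : ℕ} (hq : 1 ≤ q) (h : ∀ j, q + 1 ≠ 2 ^ j) :
    Nat.log 2 (q + 1) = Nat.log 2 q := by
  refine le_antisymm ?_ (Nat.log_mono_right (by omega))
  by_contra hlt
  push_neg at hlt
  set k := Nat.log 2 (q + 1) with hk
  have h1 : 2 ^ k ≤ q + 1 := Nat.pow_log_le_self 2 (by omega)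
  have h2 : q < 2 ^ k := (Nat.log_lt_iff_lt_pow one_lt_two (by omega)).1 hlt
  exact h k (by omega)

lemma key_step {n : ℕ} (hn : 4 ≤ n) :
    Nat.log 2 n + Nat.log 2 (2 * n / 3)
      = Nat.log 2 (n / 2) + Nat.log 2 (2 * (n / 2) / 3) + 2 := by
  set m := n / 2 with hm
  have hm2 : 2 ≤ m := by omega
  set q := 2 * m / 3 with hq
  have hq1 : 1 ≤ q := by omega
  rcases Nat.even_or_odd n with ⟨k, hk⟩ | ⟨k, hk⟩
  · -- n = 2m even
    have hnm : n = 2 * m := by omega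
    have hL : Nat.log 2 n = Nat.log 2 m + 1 := by
      rw [hnm]; exact log2_two_mul (by omega)
    have hcase : 2 * n / 3 = 2 * q ∨ 2 * n / 3 = 2 * q + 1 := by omega
    rcases hcase with h | h
    · rw [hL, h, log2_two_mul hq1]; ring
    · rw [hL, h, log2_two_mul_add_one hq1]; ring
  · -- n = 2m + 1 odd
    have hnm : n = 2 * m + 1 := by omega
    have hL : Nat.log 2 n = Nat.log 2 m + 1 := by
      rw [hnm]; exact log2_two_mul_add_one (by omega)
    have hcase : 2 * n / 3 = 2 * q ∨ 2 * n / 3 = 2 * q + 1 ∨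
        (2 * n / 3 = 2 * (q + 1) ∧ 2 * m + 1 = 3 * (q + 1)) := by omega
    rcases hcase with h | h | ⟨h, hx⟩
    · rw [hL, h, log2_two_mul hq1]; ring
    · rw [hL, h, log2_two_mul_add_one hq1]; ring
    · rw [hL, h, log2_two_mul (by omega), log2_succ_of_not_pow hq1]
      · ring
      · intro j hj
        rw [hj] at hx
        rcases j with _ | j
        · omega
        · have : 2 ∣ 2 * m + 1 := by
            rw [hx, pow_succ]; exact ⟨3 * 2 ^ j, by ring⟩
          omega

lemma floor_logb_nat {n : ℕ} (hn : 1 ≤ n) :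
    ⌊Real.logb 2 (n : ℝ)⌋ = (Nat.log 2 n : ℤ) := by
  rw [show (2:ℝ) = ((2:ℕ):ℝ) by norm_num, Real.floor_logb_natCast (by positivity),
    Int.log_natCast]

lemma floor_logb_frac {n : ℕ} (hn : 2 ≤ n) :
    ⌊Real.logb 2 ((2 * n : ℝ) / 3)⌋ = (Nat.log 2 (2 * n / 3) : ℤ) := by
  have h1 : (1 : ℝ) ≤ (2 * n : ℝ) / 3 := by
    rw [le_div_iff₀ (by norm_num)]
    have : (2 : ℝ) ≤ (n : ℝ) := by exact_mod_cast hn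
    nlinarith
  have h2 : ((2 * n : ℝ) / 3) = ((2 * n : ℕ) : ℝ) / ((3 : ℕ) : ℝ) := by push_cast; ring
  rw [h2] at h1 ⊢
  rw [show (2:ℝ) = ((2:ℕ):ℝ) by norm_num, Real.floor_logb_natCast (by linarith),
    Int.log_of_one_le_right _ h1]
  rw [Nat.floor_div_natCast, Nat.floor_natCast]

/-- The function `C` defined by `C 2 = 1`, `C 3 = 2` and
`C n = 2⌊(n-1)/2⌋ + C ⌊n/2⌋` for `n ≥ 4` satisfies
`C n = 2n - 2 - ⌊log₂ n⌋ - ⌊log₂ (2n/3)⌋` for all `n ≥ 2`. -/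
theorem ladder1_count_formula (C : ℕ → ℕ)
    (hC2 : C 2 = 1) (hC3 : C 3 = 2)
    (hCrec : ∀ n, 4 ≤ n → C n = 2 * ((n - 1) / 2) + C (n / 2)) :
    ∀ n, 2 ≤ n →
      (C n : ℤ) = 2 * n - 2 - ⌊Real.logb 2 (n : ℝ)⌋ - ⌊Real.logb 2 ((2 * n : ℝ) / 3)⌋ := by
  have main : ∀ n, 2 ≤ n →
      (C n : ℤ) = 2 * n - 2 - Nat.log 2 n - Nat.log 2 (2 * n / 3) := by
    intro n
    induction n using Nat.strong_induction_on with
    | _ n ih =>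
      intro hn
      rcases lt_or_ge n 4 with h4 | h4
      · interval_cases n
        · rw [hC2]; norm_num [show Nat.log 2 2 = 1 from Nat.log_eq_of_pow_le_of_lt_pow (by norm_num) (by norm_num),
            show Nat.log 2 (2 * 2 / 3) = 0 from by norm_num [Nat.log_eq_zero_iff]]
        · rw [hC3]; norm_num [show Nat.log 2 3 = 1 from Nat.log_eq_of_pow_le_of_lt_pow (by norm_num) (by norm_num),
            show Nat.log 2 (2 * 3 / 3) = 1 from Nat.log_eq_of_pow_le_of_lt_pow (by norm_num) (by norm_num)]
      · have IH := ih (n / 2) (by omega) (by omega)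
        have hk := key_step h4
        rw [hCrec n h4]
        push_cast [IH]
        have hd : ((n : ℕ) - 1) / 2 + n / 2 = n - 1 := by omega
        zify at hd hk
        set L1 := (Nat.log 2 n : ℤ)
        set M1 := (Nat.log 2 (2 * n / 3) : ℤ)
        set L2 := (Nat.log 2 (n / 2) : ℤ)
        set M2 := (Nat.log 2 (2 * (n / 2) / 3) : ℤ)
        have hc : ((n - 1 : ℕ) : ℤ) = (n : ℤ) - 1 := by omega
        linarith [hd, hk, hc]
  intro n hn
  rw [floor_logb_nat (by omega : 1 ≤ n), floor_logb_frac hn]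
  exact main n hn
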